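/- Let n≥3 be odd and let (G,φ) be a C_n-tight graph containing a vertex v that is incident to exactly two elements of E∪L, i.e. either two edges, or one edge and one loop. Let γ be a generator of Γ=ℤ/nℤ. Then the graph G∖{φ(γ)^i v : 0≤i≤n−1} obtained by deleting the full vertex orbit of v together with all incident edges and loops, with the induced Γ-action, is C_n-tight. -/

import Mathlib

open Finset
open scoped Classical

/-- A looped simple graph `G = (V, E, L)`: a finite vertex set `vs`, a finite set `es` of
edges (unordered pairs of distinct vertices of `vs`, no multiple edges) and a finite set `ls`
of loops, each loop `l` being incident to the vertex `loopAt l ∈ vs`. -/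
structure LGraph (V L : Type) where
  vs : Finset V
  es : Finset (Sym2 V)
  ls : Finset L
  loopAt : L → V
  es_not_diag : ∀ e ∈ es, ¬ e.IsDiag
  es_mem : ∀ e ∈ es, ∀ u ∈ e, u ∈ vs
  ls_mem : ∀ l ∈ ls, loopAt l ∈ vs

namespace LGraph

variable {V L : Type}

/-- `i_E(X)`: the number of edges induced by a vertex set `X`. -/
noncomputable def iE (H : LGraph V L) (X : Finset V) : ℕ :=
  (H.es.filter fun e => ∀ u ∈ e, u ∈ X).card

/-- `i_L(X)`: the number of loops induced by a vertex set `X`. -/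
noncomputable def iL (H : LGraph V L) (X : Finset V) : ℕ :=
  (H.ls.filter fun l => H.loopAt l ∈ X).card

/-- `i_{E+L}(X)`: the number of edges and loops induced by a vertex set `X`. -/
noncomputable def iEL (H : LGraph V L) (X : Finset V) : ℕ :=
  H.iE X + H.iL X

/-- `G` is sparse if `|E'| + |L'| ≤ 2|V'|` for all subgraphs and `|E'| ≤ 2|V'| - 3` for all
loopless subgraphs with at least one edge (formulated via induced counts). -/
def Sparse (H : LGraph V L) : Prop :=
  (∀ X ⊆ H.vs, H.iEL X ≤ 2 * X.card) ∧
  (∀ X ⊆ H.vs, 0 < H.iE X → H.iE X + 3 ≤ 2 * X.card)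

/-- `G` is tight if it is sparse and `|E| + |L| = 2|V|`. -/
def Tight (H : LGraph V L) : Prop :=
  H.Sparse ∧ H.es.card + H.ls.card = 2 * H.vs.card

/-- `k_X = 2|X| - i_{E+L}(X)`. -/
noncomputable def kval (H : LGraph V L) (X : Finset V) : ℤ :=
  2 * (X.card : ℤ) - (H.iEL X : ℤ)

/-- `k̄_X = 2|X| - i_E(X)`. -/
noncomputable def kbar (H : LGraph V L) (X : Finset V) : ℤ :=
  2 * (X.card : ℤ) - (H.iE X : ℤ)

/-- `d(A,B)`: the number of edges with one endpoint in `A \ B` and the other in `B \ A`. -/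
noncomputable def dAB (H : LGraph V L) (A B : Finset V) : ℕ :=
  (H.es.filter fun e =>
    ∃ a ∈ e, ∃ b ∈ e, a ≠ b ∧ (a ∈ A ∧ a ∉ B) ∧ (b ∈ B ∧ b ∉ A)).card

/-- `X` is `k`-critical if `i_{E+L}(X) = 2|X| - k`. -/
def kCrit (H : LGraph V L) (k : ℕ) (X : Finset V) : Prop :=
  X ⊆ H.vs ∧ H.iEL X + k = 2 * X.card

/-- `X` is `k`-edge-critical if `i_E(X) = 2|X| - k`. -/
def kEdgeCrit (H : LGraph V L) (k : ℕ) (X : Finset V) : Prop :=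
  X ⊆ H.vs ∧ H.iE X + k = 2 * X.card

/-- The edges incident to a vertex `v`. -/
noncomputable def edgesAt (H : LGraph V L) (v : V) : Finset (Sym2 V) :=
  H.es.filter fun e => v ∈ e

/-- The loops incident to a vertex `v`. -/
noncomputable def loopsAt (H : LGraph V L) (v : V) : Finset L :=
  H.ls.filter fun l => H.loopAt l = v

/-- The set `N(v)` of neighbours of a vertex `v`. -/
noncomputable def nbrs (H : LGraph V L) (v : V) : Finset V :=
  H.vs.filter fun u => s(v, u) ∈ H.es

end LGraph

/-- A `Γ`-symmetric structure on a looped simple graph: an action of `Γ` by automorphisms,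
i.e. compatible permutations of vertices and loops preserving edge and loop incidences,
such that a loop may only be fixed by elements of order at most 2. -/
structure LAction (Γ : Type) [Group Γ] {V L : Type} (H : LGraph V L) where
  toV : Γ →* Equiv.Perm V
  toL : Γ →* Equiv.Perm L
  vs_inv : ∀ (γ : Γ), ∀ u ∈ H.vs, toV γ u ∈ H.vs
  es_inv : ∀ (γ : Γ), ∀ e ∈ H.es, Sym2.map (toV γ) e ∈ H.es
  ls_inv : ∀ (γ : Γ), ∀ l ∈ H.ls, toL γ l ∈ H.ls
  loop_compat : ∀ (γ : Γ), ∀ l ∈ H.ls, H.loopAt (toL γ l) = toV γ (H.loopAt l)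
  loop_fix_order : ∀ (γ : Γ), ∀ l ∈ H.ls, toL γ l = l → γ * γ = 1

section Symmetry

variable {Γ V L : Type} [Group Γ] {H : LGraph V L}

/-- The vertices fixed by the group element `γ`. -/
noncomputable def fixedV (act : LAction Γ H) (γ : Γ) : Finset V :=
  H.vs.filter fun u => act.toV γ u = u

/-- The edges fixed by the group element `γ`. -/
noncomputable def fixedE (act : LAction Γ H) (γ : Γ) : Finset (Sym2 V) :=
  H.es.filter fun e => Sym2.map (act.toV γ) e = e

/-- The loops fixed by the group element `γ`. -/
noncomputable def fixedL (act : LAction Γ H) (γ : Γ) : Finset L :=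
  H.ls.filter fun l => act.toL γ l = l

/-- No vertex, edge or loop is fixed by any non-identity element. -/
def NoFixAll (act : LAction Γ H) : Prop :=
  ∀ γ : Γ, γ ≠ 1 → fixedV act γ = ∅ ∧ fixedE act γ = ∅ ∧ fixedL act γ = ∅

/-- The fixed-element condition for the group `C₂`: either nothing is fixed by the
non-trivial element, or exactly one vertex, no edge and exactly two loops are fixed. -/
def C2Cond (act : LAction Γ H) : Prop :=
  NoFixAll act ∨
    ∀ γ : Γ, γ ≠ 1 →
      (fixedV act γ).card = 1 ∧ fixedE act γ = ∅ ∧ (fixedL act γ).card = 2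

/-- The fixed-element condition for the group `C₄` with generator `g`. -/
def C4Cond (act : LAction Γ H) (g : Γ) : Prop :=
  NoFixAll act ∨
    ((H.vs.filter fun u => ∀ γ : Γ, act.toV γ u = u).card = 1 ∧
      (∀ γ : Γ, γ ≠ 1 → fixedE act γ = ∅) ∧
      (fixedL act (g * g)).card = 2 ∧
      fixedL act g = ∅ ∧ fixedL act (g * g * g) = ∅)

/-- `(G,φ)` is `C₂`-tight. -/
def C2Tight (act : LAction Γ H) : Prop :=
  H.Tight ∧ C2Cond act

/-- `(G,φ)` is `Cₙ`-tight for `n ≥ 3`, `n ≠ 4`: tight and nothing is fixed by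
non-identity elements. -/
def CnTightOdd (act : LAction Γ H) : Prop :=
  H.Tight ∧ NoFixAll act

/-- `(G,φ)` is `Cₙ`-tight, where `g` is a generator of the cyclic group `Γ` of order `n`. -/
def CnTightFull (n : ℕ) (act : LAction Γ H) (g : Γ) : Prop :=
  H.Tight ∧ (n = 2 → C2Cond act) ∧ (n = 4 → C4Cond act g) ∧
    (n ≠ 2 → n ≠ 4 → NoFixAll act)

end Symmetry
/-- for odd `n ≥ 3`, in a `Cₙ`-tight graph, deleting the full vertex orbit of
a vertex `v` incident to exactly two elements of `E ∪ L` gives a `Cₙ`-tight graph with the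
induced action. -/
theorem statement17 {Γ V L : Type} [Group Γ] [Fintype Γ] (n : ℕ) (hn : 3 ≤ n)
    (hodd : Odd n) (g : Γ) (hord : orderOf g = n) (hgen : ∀ x : Γ, x ∈ Subgroup.zpowers g)
    (H : LGraph V L) (act : LAction Γ H) (htight : CnTightOdd act)
    (v : V) (hv : v ∈ H.vs)
    (hdeg : ((H.edgesAt v).card = 2 ∧ (H.loopsAt v).card = 0) ∨
            ((H.edgesAt v).card = 1 ∧ (H.loopsAt v).card = 1)) :
    ∃ H' : LGraph V L,
      H'.vs = H.vs \ Finset.image (fun γ : Γ => act.toV γ v) Finset.univ ∧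
      H'.es = (H.es.filter fun e =>
        ∀ u ∈ e, u ∉ Finset.image (fun γ : Γ => act.toV γ v) Finset.univ) ∧
      H'.ls = (H.ls.filter fun l =>
        H.loopAt l ∉ Finset.image (fun γ : Γ => act.toV γ v) Finset.univ) ∧
      (∀ l ∈ H'.ls, H'.loopAt l = H.loopAt l) ∧
      ∃ act' : LAction Γ H', act'.toV = act.toV ∧ act'.toL = act.toL ∧ CnTightOdd act' := by
  classical
  obtain ⟨⟨⟨hsp1, hsp2⟩, hcount⟩, hnofix⟩ := htight
  set O : Finset V := Finset.image (fun γ : Γ => act.toV γ v) Finset.univ with hOdef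
  have hcancel : ∀ (γ : Γ) (u : V), act.toV γ⁻¹ (act.toV γ u) = u := fun γ u => by
    rw [map_inv]; exact Equiv.symm_apply_apply _ _
  have hcancel' : ∀ (γ : Γ) (u : V), act.toV γ (act.toV γ⁻¹ u) = u := fun γ u => by
    rw [map_inv]; exact Equiv.apply_symm_apply _ _
  have hfree : ∀ (γ : Γ) (u : V), u ∈ H.vs → act.toV γ u = u → γ = 1 := by
    intro γ u hu hfix
    by_contra hγ
    have h1 := (hnofix γ hγ).1
    have h2 : u ∈ fixedV act γ := Finset.mem_filter.2 ⟨hu, hfix⟩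
    rw [h1] at h2; exact absurd h2 (Finset.notMem_empty u)
  have hOsub : O ⊆ H.vs := by
    intro u hu
    obtain ⟨γ, -, rfl⟩ := Finset.mem_image.1 hu
    exact act.vs_inv γ v hv
  have hOcard : O.card = n := by
    have hinj : Function.Injective (fun γ : Γ => act.toV γ v) := by
      intro a b hab
      simp only at hab
      have h1 : act.toV (b⁻¹ * a) v = v := by
        rw [map_mul, Equiv.Perm.mul_apply, hab, ← Equiv.Perm.mul_apply, ← map_mul,
          inv_mul_cancel, map_one, Equiv.Perm.one_apply]
      have h2 := hfree _ v hv h1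
      rw [inv_mul_eq_one] at h2
      exact h2.symm
    rw [hOdef, Finset.card_image_of_injective _ hinj, Finset.card_univ,
      ← Nat.card_eq_fintype_card, ← orderOf_eq_card_of_forall_mem_zpowers hgen, hord]
  have hOinv' : ∀ (γ : Γ) (u : V), act.toV γ u ∈ O → u ∈ O := by
    intro γ u hu
    obtain ⟨δ, -, hδ⟩ := Finset.mem_image.1 hu
    refine Finset.mem_image.2 ⟨γ⁻¹ * δ, Finset.mem_univ _, ?_⟩
    rw [map_mul, Equiv.Perm.mul_apply, hδ, hcancel]
  have hOinv : ∀ (γ : Γ) (u : V), u ∈ O → act.toV γ u ∈ O := by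
    intro γ u hu
    obtain ⟨δ, -, rfl⟩ := Finset.mem_image.1 hu
    refine Finset.mem_image.2 ⟨γ * δ, Finset.mem_univ _, ?_⟩
    rw [map_mul]; rfl
  have hdegO : ∀ u ∈ O, (H.edgesAt u).card + (H.loopsAt u).card = 2 := by
    intro u hu
    obtain ⟨γ, -, rfl⟩ := Finset.mem_image.1 hu
    have hE : H.edgesAt (act.toV γ v) = (H.edgesAt v).image (Sym2.map (act.toV γ)) := by
      ext e
      simp only [LGraph.edgesAt, Finset.mem_filter, Finset.mem_image]
      constructor
      · rintro ⟨hes, hve⟩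
        refine ⟨Sym2.map (act.toV γ⁻¹) e, ⟨act.es_inv γ⁻¹ e hes, ?_⟩, ?_⟩
        · exact Sym2.mem_map.2 ⟨act.toV γ v, hve, hcancel γ v⟩
        · rw [Sym2.map_map]
          have hid : (act.toV γ) ∘ (act.toV γ⁻¹) = id := funext fun x => hcancel' γ x
          rw [hid, Sym2.map_id, id_eq]
      · rintro ⟨f, ⟨hfs, hvf⟩, rfl⟩
        exact ⟨act.es_inv γ f hfs, Sym2.mem_map.2 ⟨v, hvf, rfl⟩⟩
    have hL : H.loopsAt (act.toV γ v) = (H.loopsAt v).image (act.toL γ) := by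
      ext l
      simp only [LGraph.loopsAt, Finset.mem_filter, Finset.mem_image]
      constructor
      · rintro ⟨hls, hla⟩
        refine ⟨act.toL γ⁻¹ l, ⟨act.ls_inv γ⁻¹ l hls, ?_⟩, ?_⟩
        · rw [act.loop_compat γ⁻¹ l hls, hla, hcancel]
        · rw [← Equiv.Perm.mul_apply, ← map_mul, mul_inv_cancel, map_one, Equiv.Perm.one_apply]
      · rintro ⟨m, ⟨hms, hma⟩, rfl⟩
        exact ⟨act.ls_inv γ m hms, by rw [act.loop_compat γ m hms, hma]⟩
    rw [hE, hL, Finset.card_image_of_injective _ (Sym2.map.injective (act.toV γ).injective),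
      Finset.card_image_of_injective _ (act.toL γ).injective]
    rcases hdeg with ⟨h1, h2⟩ | ⟨h1, h2⟩ <;> omega
  -- deleted elements bound
  have hDsum : (H.es.filter fun e => ¬ ∀ u ∈ e, u ∉ O).card
      + (H.ls.filter fun l => ¬ H.loopAt l ∉ O).card ≤ 2 * n := by
    have h1 : (H.es.filter fun e => ¬ ∀ u ∈ e, u ∉ O) ⊆ O.biUnion (fun u => H.edgesAt u) := by
      intro e he
      rw [Finset.mem_filter] at he
      obtain ⟨hes, hne⟩ := he
      push_neg at hne
      obtain ⟨u, hue, huO⟩ := hne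
      exact Finset.mem_biUnion.2 ⟨u, huO, Finset.mem_filter.2 ⟨hes, hue⟩⟩
    have h2 : (H.ls.filter fun l => ¬ H.loopAt l ∉ O) ⊆ O.biUnion (fun u => H.loopsAt u) := by
      intro l hl
      rw [Finset.mem_filter, not_not] at hl
      exact Finset.mem_biUnion.2 ⟨H.loopAt l, hl.2, Finset.mem_filter.2 ⟨hl.1, rfl⟩⟩
    calc (H.es.filter fun e => ¬ ∀ u ∈ e, u ∉ O).card
          + (H.ls.filter fun l => ¬ H.loopAt l ∉ O).card
        ≤ (O.biUnion fun u => H.edgesAt u).card + (O.biUnion fun u => H.loopsAt u).card :=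
          Nat.add_le_add (Finset.card_le_card h1) (Finset.card_le_card h2)
      _ ≤ (∑ u ∈ O, (H.edgesAt u).card) + ∑ u ∈ O, (H.loopsAt u).card :=
          Nat.add_le_add Finset.card_biUnion_le Finset.card_biUnion_le
      _ = ∑ u ∈ O, ((H.edgesAt u).card + (H.loopsAt u).card) := Finset.sum_add_distrib.symm
      _ = ∑ u ∈ O, 2 := Finset.sum_congr rfl hdegO
      _ = 2 * n := by rw [Finset.sum_const, hOcard, smul_eq_mul, mul_comm]
  set Hes' : Finset (Sym2 V) := H.es.filter (fun e => ∀ u ∈ e, u ∉ O) with hes'def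
  set Hls' : Finset L := H.ls.filter (fun l => H.loopAt l ∉ O) with hls'def
  -- filter transfer for subsets of H.vs \ O
  have hsub1 : ∀ X ⊆ H.vs \ O,
      (Hes'.filter fun e => ∀ u ∈ e, u ∈ X) = (H.es.filter fun e => ∀ u ∈ e, u ∈ X) := by
    intro X hX
    rw [hes'def, Finset.filter_filter]
    refine Finset.filter_congr fun e he => ?_
    constructor
    · exact fun h => h.2
    · intro h
      exact ⟨fun u hu => (Finset.mem_sdiff.1 (hX (h u hu))).2, h⟩
  have hsub2 : ∀ X ⊆ H.vs \ O,
      (Hls'.filter fun l => H.loopAt l ∈ X) = (H.ls.filter fun l => H.loopAt l ∈ X) := by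
    intro X hX
    rw [hls'def, Finset.filter_filter]
    refine Finset.filter_congr fun l hl => ?_
    constructor
    · exact fun h => h.2
    · intro h
      exact ⟨(Finset.mem_sdiff.1 (hX h)).2, h⟩
  -- full induced counts on H.vs \ O
  have hfull1 : (Hes'.filter fun e => ∀ u ∈ e, u ∈ H.vs \ O) = Hes' := by
    refine Finset.filter_true_of_mem fun e he => ?_
    rw [hes'def, Finset.mem_filter] at he
    exact fun u hu => Finset.mem_sdiff.2 ⟨H.es_mem e he.1 u hu, he.2 u hu⟩
  have hfull2 : (Hls'.filter fun l => H.loopAt l ∈ H.vs \ O) = Hls' := by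
    refine Finset.filter_true_of_mem fun l hl => ?_
    rw [hls'def, Finset.mem_filter] at hl
    exact Finset.mem_sdiff.2 ⟨H.ls_mem l hl.1, hl.2⟩
  -- tight count
  have hcard' : Hes'.card + Hls'.card = 2 * (H.vs \ O).card := by
    have hle : Hes'.card + Hls'.card ≤ 2 * (H.vs \ O).card := by
      have h1 := hsp1 (H.vs \ O) Finset.sdiff_subset
      rw [LGraph.iEL, LGraph.iE, LGraph.iL, ← hsub1 _ (Finset.Subset.refl _),
        ← hsub2 _ (Finset.Subset.refl _), hfull1, hfull2] at h1
      exact h1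
    have hsplitE : Hes'.card + (H.es.filter fun e => ¬ ∀ u ∈ e, u ∉ O).card = H.es.card := by
      rw [hes'def]; exact Finset.card_filter_add_card_filter_not _
    have hsplitL : Hls'.card + (H.ls.filter fun l => ¬ H.loopAt l ∉ O).card = H.ls.card := by
      rw [hls'def]; exact Finset.card_filter_add_card_filter_not _
    have hvsplit : (H.vs \ O).card + O.card = H.vs.card :=
      Finset.card_sdiff_add_card_eq_card hOsub
    omega
  refine ⟨⟨H.vs \ O, Hes', Hls', H.loopAt,
      fun e he => H.es_not_diag e (Finset.mem_filter.1 he).1,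
      fun e he u hu => Finset.mem_sdiff.2
        ⟨H.es_mem e (Finset.mem_filter.1 he).1 u hu, (Finset.mem_filter.1 he).2 u hu⟩,
      fun l hl => Finset.mem_sdiff.2
        ⟨H.ls_mem l (Finset.mem_filter.1 hl).1, (Finset.mem_filter.1 hl).2⟩⟩,
    rfl, rfl, rfl, fun l _ => rfl,
    ⟨act.toV, act.toL,
      fun γ u hu => Finset.mem_sdiff.2
        ⟨act.vs_inv γ u (Finset.mem_sdiff.1 hu).1,
         fun h => (Finset.mem_sdiff.1 hu).2 (hOinv' γ u h)⟩,
      ?_, ?_,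
      fun γ l hl => act.loop_compat γ l (Finset.mem_filter.1 hl).1,
      fun γ l hl => act.loop_fix_order γ l (Finset.mem_filter.1 hl).1⟩,
    rfl, rfl, ?_, ?_⟩
  · -- es_inv
    intro γ e he
    have he' : e ∈ H.es ∧ ∀ u ∈ e, u ∉ O := Finset.mem_filter.1 he
    refine Finset.mem_filter.2 ⟨act.es_inv γ e he'.1, fun u hu => ?_⟩
    obtain ⟨w, hwe, rfl⟩ := Sym2.mem_map.1 hu
    exact fun hc => he'.2 w hwe (hOinv' γ w hc)
  · -- ls_inv
    intro γ l hl
    have hl' : l ∈ H.ls ∧ H.loopAt l ∉ O := Finset.mem_filter.1 hl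
    refine Finset.mem_filter.2 ⟨act.ls_inv γ l hl'.1, ?_⟩
    rw [act.loop_compat γ l hl'.1]
    exact fun hc => hl'.2 (hOinv' γ _ hc)
  · -- Tight
    refine ⟨⟨?_, ?_⟩, ?_⟩
    · intro X hX
      show (Hes'.filter fun e => ∀ u ∈ e, u ∈ X).card
          + (Hls'.filter fun l => H.loopAt l ∈ X).card ≤ 2 * X.card
      rw [hsub1 X hX, hsub2 X hX]
      exact hsp1 X (hX.trans Finset.sdiff_subset)
    · intro X hX hpos
      have hiE : (Hes'.filter fun e => ∀ u ∈ e, u ∈ X).card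
          = (H.es.filter fun e => ∀ u ∈ e, u ∈ X).card := by rw [hsub1 X hX]
      have hpos' : 0 < H.iE X := by
        rw [LGraph.iE, ← hiE]; exact hpos
      have h := hsp2 X (hX.trans Finset.sdiff_subset) hpos'
      rw [LGraph.iE] at h
      show (Hes'.filter fun e => ∀ u ∈ e, u ∈ X).card + 3 ≤ 2 * X.card
      rw [hiE]; exact h
    · exact hcard'
  · -- NoFixAll
    intro γ hγ
    obtain ⟨hfv, hfe, hfl⟩ := hnofix γ hγ
    refine ⟨?_, ?_, ?_⟩
    · rw [Finset.eq_empty_iff_forall_notMem]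
      intro x hx
      simp only [fixedV, Finset.mem_filter] at hx
      have : x ∈ fixedV act γ :=
        Finset.mem_filter.2 ⟨(Finset.mem_sdiff.1 hx.1).1, hx.2⟩
      rw [hfv] at this; exact Finset.notMem_empty x this
    · rw [Finset.eq_empty_iff_forall_notMem]
      intro e he
      simp only [fixedE, Finset.mem_filter] at he
      have : e ∈ fixedE act γ :=
        Finset.mem_filter.2 ⟨(Finset.mem_filter.1 he.1).1, he.2⟩
      rw [hfe] at this; exact Finset.notMem_empty e this
    · rw [Finset.eq_empty_iff_forall_notMem]
      intro l hl
      simp only [fixedL, Finset.mem_filter] at hl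
      have : l ∈ fixedL act γ :=
        Finset.mem_filter.2 ⟨(Finset.mem_filter.1 hl.1).1, hl.2⟩
      rw [hfl] at this; exact Finset.notMem_empty l this
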